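/- Let (x_i, f_i) be a Schauder frame of a Banach space X. If the frame is both pre-shrinking and pre-boundedly complete, then X is reflexive. -/
import Mathlib


open Filter Topology

/-- If `(x i, f i)` is a Schauder frame of a Banach space `X` which is
both pre-shrinking and pre-boundedly complete, then `X` is reflexive: the canonical
isometric embedding of `X` into its double dual is surjective. -/
theorem schauderFrame_preShrinking_preBoundedlyComplete_reflexive
    {X : Type*} [NormedAddCommGroup X] [NormedSpace ℝ X] [CompleteSpace X]
    (x : ℕ → X) (f : ℕ → X →L[ℝ] ℝ)
    (hx : ∀ i, x i ≠ 0) (hf : ∀ i, f i ≠ 0)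
    (hframe : ∀ v : X,
      Tendsto (fun n => ∑ i ∈ Finset.range n, f i v • x i) atTop (𝓝 v))
    (hpreShr : ∀ g : X →L[ℝ] ℝ,
      Tendsto (fun n => ∑ i ∈ Finset.range n, g (x i) • f i) atTop (𝓝 g))
    (hpreBdd : ∀ F : (X →L[ℝ] ℝ) →L[ℝ] ℝ, ∃ v : X,
      Tendsto (fun n => ∑ i ∈ Finset.range n, F (f i) • x i) atTop (𝓝 v)) :
    Function.Surjective (NormedSpace.inclusionInDoubleDual ℝ X) := by
  intro F
  obtain ⟨v, hv⟩ := hpreBdd F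
  refine ⟨v, ?_⟩
  ext g
  have h1 : Tendsto (fun n => F (∑ i ∈ Finset.range n, g (x i) • f i)) atTop (𝓝 (F g)) :=
    (F.continuous.tendsto g).comp (hpreShr g)
  have h2 : Tendsto (fun n => g (∑ i ∈ Finset.range n, F (f i) • x i)) atTop (𝓝 (g v)) :=
    (g.continuous.tendsto v).comp hv
  have heq : (fun n => F (∑ i ∈ Finset.range n, g (x i) • f i))
      = fun n => g (∑ i ∈ Finset.range n, F (f i) • x i) := by
    funext n
    simp [map_sum, mul_comm]
  rw [heq] at h1
  have : F g = g v := tendsto_nhds_unique h1 h2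
  simpa [NormedSpace.inclusionInDoubleDual] using this.symm
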